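/- The relation ≿ on subsets of a countably infinite group G, where A ≿ B iff there is a sequence (gₙ) in G and a subset B' with Agₙ → B' (pointwise convergence of indicators) and B ≈ B', is transitive. -/
import Mathlib


open scoped Pointwise

def Bdd {G : Type*} [Group G] (A B : Set G) : Prop :=
  ∃ F : Finset G, A ⊆ (F : Set G) * B

def EquivBdd {G : Type*} [Group G] (A B : Set G) : Prop :=
  Bdd A B ∧ Bdd B A

def ConvSets {G : Type*} (C : ℕ → Set G) (L : Set G) : Prop :=
  ∀ x : G, ∀ᶠ n in Filter.atTop, (x ∈ C n ↔ x ∈ L)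

/-- `A ≿ B`: some sequence of right translates of `A` converges to a set equivalent to `B`. -/
def Succsim {G : Type*} [Group G] (A B : Set G) : Prop :=
  ∃ (g : ℕ → G) (B' : Set G), ConvSets (fun n => (· * g n) '' A) B' ∧ EquivBdd B B'

open Filter Topology

section Helpers

variable {G : Type*} [Group G]

lemma bdd_trans' {A B C : Set G} (h1 : Bdd A B) (h2 : Bdd B C) : Bdd A C := by
  classical
  obtain ⟨F1, h1⟩ := h1
  obtain ⟨F2, h2⟩ := h2
  refine ⟨F1 * F2, ?_⟩
  calc A ⊆ (F1 : Set G) * B := h1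
    _ ⊆ (F1 : Set G) * ((F2 : Set G) * C) := Set.mul_subset_mul_left h2
    _ = ((F1 * F2 : Finset G) : Set G) * C := by push_cast; rw [mul_assoc]

lemma convsets_subseq {α : Type*} {C : ℕ → Set α} {L : Set α} (h : ConvSets C L) {φ : ℕ → ℕ}
    (hφ : StrictMono φ) : ConvSets (fun n => C (φ n)) L :=
  fun x => hφ.tendsto_atTop.eventually (h x)

lemma mem_mul_singleton {S : Set G} {k x : G} : x ∈ S * {k} ↔ x * k⁻¹ ∈ S := by
  rw [Set.mul_singleton]
  constructor
  · rintro ⟨y, hy, rfl⟩; simpa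
  · intro hx; exact ⟨x * k⁻¹, hx, by simp⟩

lemma convsets_mul_right {C : ℕ → Set G} {L : Set G} (h : ConvSets C L) (k : G) :
    ConvSets (fun n => C n * {k}) (L * {k}) := by
  intro x
  filter_upwards [h (x * k⁻¹)] with n hn
  simpa only [mem_mul_singleton] using hn

lemma exists_conv_subseq {G : Type*} [Countable G] (D : ℕ → Set G) :
    ∃ φ : ℕ → ℕ, StrictMono φ ∧ ∃ L : Set G, ConvSets (fun n => D (φ n)) L := by
  classical
  let f : ℕ → (G → Bool) := fun n x => decide (x ∈ D n)
  obtain ⟨L, -, φ, hφ, hconv⟩ :=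
    IsCompact.isSeqCompact (isCompact_univ : IsCompact (Set.univ : Set (G → Bool)))
      (fun n => Set.mem_univ (f n))
  refine ⟨φ, hφ, {x | L x = true}, fun x => ?_⟩
  have hx : Tendsto (fun n => f (φ n) x) atTop (𝓝 (L x)) := (tendsto_pi_nhds.1 hconv) x
  rw [nhds_discrete, tendsto_pure] at hx
  filter_upwards [hx] with n hn
  simp only [Set.mem_setOf_eq, ← hn, f, decide_eq_true_eq]

lemma conv_bdd {D D' : ℕ → Set G} {L L' : Set G} {F : Finset G}
    (hD : ConvSets D L) (hD' : ConvSets D' L') (hsub : ∀ n, D n ⊆ (F : Set G) * D' n) :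
    L ⊆ (F : Set G) * L' := by
  intro x hx
  have h1 : ∀ᶠ n in atTop, ∃ f ∈ F, f⁻¹ * x ∈ D' n := by
    filter_upwards [hD x] with n hn
    obtain ⟨f, hf, d, hd, hfd⟩ := hsub n (hn.mpr hx)
    exact ⟨f, hf, by rw [← hfd]; simpa⟩
  by_contra hcon
  rw [Set.mem_mul] at hcon
  push_neg at hcon
  have h2 : ∀ᶠ n in atTop, ∀ f ∈ F, f⁻¹ * x ∉ D' n := by
    rw [eventually_all_finset]
    intro f hf
    filter_upwards [hD' (f⁻¹ * x)] with n hn hmem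
    exact hcon f hf (f⁻¹ * x) (hn.mp hmem) (by simp)
  obtain ⟨n, ⟨f, hf, hmem⟩, hall⟩ := (h1.and h2).exists
  exact hall f hf hmem

end Helpers

theorem stmt17 {G : Type*} [Group G] [Countable G] [Infinite G]
    (A B C : Set G) (hAB : Succsim A B) (hBC : Succsim B C) : Succsim A C := by
  classical
  obtain ⟨g, B', hg, hB1, hB2⟩ := hAB
  obtain ⟨h, C', hh, hC1, hC2⟩ := hBC
  obtain ⟨F1, hF1⟩ := hB1
  obtain ⟨F2, hF2⟩ := hB2
  have hg' : ConvSets (fun n => A * {g n}) B' := by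
    simpa only [Set.mul_singleton] using hg
  have hh' : ConvSets (fun n => B * {h n}) C' := by
    simpa only [Set.mul_singleton] using hh
  obtain ⟨ψ, hψ, C'', hC''⟩ := exists_conv_subseq (fun m => B' * {h m})
  have hhψ : ConvSets (fun m => B * {h (ψ m)}) C' := convsets_subseq hh' hψ
  have hsub1 : ∀ m, B * {h (ψ m)} ⊆ (F1 : Set G) * (B' * {h (ψ m)}) := by
    intro m
    rw [← mul_assoc]
    exact Set.mul_subset_mul_right hF1
  have hsub2 : ∀ m, B' * {h (ψ m)} ⊆ (F2 : Set G) * (B * {h (ψ m)}) := by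
    intro m
    rw [← mul_assoc]
    exact Set.mul_subset_mul_right hF2
  have hCC1 : C' ⊆ (F1 : Set G) * C'' := conv_bdd hhψ hC'' hsub1
  have hCC2 : C'' ⊆ (F2 : Set G) * C' := conv_bdd hC'' hhψ hsub2
  obtain ⟨e, he⟩ := exists_surjective_nat G
  have key : ∀ m : ℕ, ∃ N : ℕ, ∀ i ≤ m,
      (e i ∈ A * {g N * h (ψ m)} ↔ e i ∈ B' * {h (ψ m)}) := by
    intro m
    have hconv : ConvSets (fun n => A * {g n * h (ψ m)}) (B' * {h (ψ m)}) := by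
      have := convsets_mul_right hg' (h (ψ m))
      simpa only [mul_assoc, Set.singleton_mul_singleton] using this
    have hev : ∀ᶠ n in atTop, ∀ i ∈ Finset.range (m + 1),
        (e i ∈ A * {g n * h (ψ m)} ↔ e i ∈ B' * {h (ψ m)}) := by
      rw [eventually_all_finset]
      intro i _
      exact hconv (e i)
    obtain ⟨N, hN⟩ := hev.exists
    exact ⟨N, fun i hi => hN i (Finset.mem_range.2 (Nat.lt_succ_of_le hi))⟩
  choose N hN using key
  refine ⟨fun m => g (N m) * h (ψ m), C'', ?_, ?_, ?_⟩
  · intro x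
    obtain ⟨i, rfl⟩ := he x
    obtain ⟨M, hM⟩ := eventually_atTop.1 (hC'' (e i))
    rw [eventually_atTop]
    refine ⟨max i M, fun m hm => ?_⟩
    have hx1 := hN m i (le_trans (le_max_left i M) hm)
    have hx2 := hM m (le_trans (le_max_right i M) hm)
    rw [Set.mul_singleton] at hx1
    exact hx1.trans hx2
  · exact bdd_trans' hC1 ⟨F1, hCC1⟩
  · exact bdd_trans' ⟨F2, hCC2⟩ hC2
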